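/- Let n ≥ 6 be even, S = {a, a^{-1}, ab, a^{n/2+1} b} ⊆ D_{2n}, and Γ = Cay(D_{2n}, S). Then the set Γ_2(1) of vertices at distance 2 from the identity in Γ is exactly {a^2, b, a^{n/2}b, a^{n/2}, a^2 b, a^{n/2+2}b, a^{-2}}, which has size 7. -/

import Mathlib

open DihedralGroup

/-- The Cayley graph of `D_{2n}` with connection set `S`. -/
def cayleyGraph (n : ℕ) (S : Set (DihedralGroup n)) : SimpleGraph (DihedralGroup n) :=
  SimpleGraph.fromRel (fun x y => y * x⁻¹ ∈ S)

/-- `S = {a, a⁻¹, ab, a^{n/2+1}b}`. -/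
def evenS (n : ℕ) : Set (DihedralGroup n) :=
  {DihedralGroup.r 1, (DihedralGroup.r 1)⁻¹,
    DihedralGroup.r 1 * DihedralGroup.sr 0,
    DihedralGroup.r (((n / 2 : ℕ) : ZMod n) + 1) * DihedralGroup.sr 0}

lemma dist_eq_two_iff' {V : Type*} (G : SimpleGraph V) (u v : V) :
    G.dist u v = 2 ↔ u ≠ v ∧ ¬G.Adj u v ∧ ∃ w, G.Adj u w ∧ G.Adj w v := by
  constructor
  · intro h
    have hne : u ≠ v := by rintro rfl; simp [SimpleGraph.dist_self] at h
    have hna : ¬G.Adj u v := by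
      intro ha; rw [← SimpleGraph.dist_eq_one_iff_adj] at ha; omega
    obtain ⟨p, hp⟩ := SimpleGraph.exists_walk_of_dist_ne_zero (by omega : G.dist u v ≠ 0)
    rw [h] at hp
    refine ⟨hne, hna, ?_⟩
    match p, hp with
    | .cons h1 (.cons h2 .nil), _ => exact ⟨_, h1, h2⟩
  · rintro ⟨hne, hna, w, h1, h2⟩
    have hle : G.dist u v ≤ 2 := by
      simpa using SimpleGraph.dist_le (SimpleGraph.Walk.cons h1 (SimpleGraph.Walk.cons h2 .nil))
    have h0 : G.dist u v ≠ 0 := by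
      rw [SimpleGraph.dist_ne_zero_iff_ne_and_reachable]
      exact ⟨hne, ⟨SimpleGraph.Walk.cons h1 (SimpleGraph.Walk.cons h2 .nil)⟩⟩
    have h1' : G.dist u v ≠ 1 := by
      rw [Ne, SimpleGraph.dist_eq_one_iff_adj]; exact hna
    omega

/-- Let `n ≥ 6` be even, `S = {a, a⁻¹, ab, a^{n/2+1}b}` and `Γ = Cay(D_{2n}, S)`.
Then the set of vertices at distance exactly `2` from the identity is
`{a², b, a^{n/2}b, a^{n/2}, a²b, a^{n/2+2}b, a⁻²}`, which has exactly `7`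
elements. -/
theorem cayley_dihedral_dist_two (n : ℕ) (hn : 6 ≤ n) (heven : Even n) :
    {v : DihedralGroup n | (cayleyGraph n (evenS n)).dist 1 v = 2} =
      ({DihedralGroup.r 2,
        DihedralGroup.sr 0,
        DihedralGroup.r ((n / 2 : ℕ) : ZMod n) * DihedralGroup.sr 0,
        DihedralGroup.r ((n / 2 : ℕ) : ZMod n),
        DihedralGroup.r 2 * DihedralGroup.sr 0,
        DihedralGroup.r (((n / 2 : ℕ) : ZMod n) + 2) * DihedralGroup.sr 0,
        DihedralGroup.r (-2)} : Set (DihedralGroup n)) ∧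
    {v : DihedralGroup n | (cayleyGraph n (evenS n)).dist 1 v = 2}.ncard = 7 := by
  obtain ⟨k, hk⟩ := heven
  have hk3 : 3 ≤ k := by omega
  set m : ZMod n := ((n / 2 : ℕ) : ZMod n) with hmdef
  have hmk : m = ((k : ℕ) : ZMod n) := by rw [hmdef]; congr 1; omega
  have hnz : ((n : ℕ) : ZMod n) = 0 := ZMod.natCast_self n
  have hmm : m + m = 0 := by
    rw [hmk, ← Nat.cast_add, show k + k = n from hk.symm, hnz]
  have hcast : ∀ a b : ℕ, a < n → b < n → a ≠ b → ((a : ZMod n) ≠ (b : ZMod n)) := by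
    intro a b ha hb hab h
    rw [ZMod.natCast_eq_natCast_iff] at h
    have h' : a % n = b % n := h
    rw [Nat.mod_eq_of_lt ha, Nat.mod_eq_of_lt hb] at h'
    exact hab h'
  have e_neg1 : ((n - 1 : ℕ) : ZMod n) = -1 := by
    have h1 : ((n - 1 : ℕ) : ZMod n) + ((1 : ℕ) : ZMod n) = 0 := by
      rw [← Nat.cast_add, show n - 1 + 1 = n by omega, hnz]
    rw [Nat.cast_one] at h1
    exact eq_neg_of_add_eq_zero_left h1
  have e_neg2 : ((n - 2 : ℕ) : ZMod n) = -2 := by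
    have h1 : ((n - 2 : ℕ) : ZMod n) + ((2 : ℕ) : ZMod n) = 0 := by
      rw [← Nat.cast_add, show n - 2 + 2 = n by omega, hnz]
    rw [Nat.cast_ofNat] at h1
    exact eq_neg_of_add_eq_zero_left h1
  have e_m1 : ((k - 1 : ℕ) : ZMod n) = m - 1 := by
    rw [hmk, Nat.cast_sub (by omega), Nat.cast_one]
  have e_m2 : ((k - 2 : ℕ) : ZMod n) = m - 2 := by
    rw [hmk, Nat.cast_sub (by omega), Nat.cast_ofNat]
  -- core inequalities
  have z01 : (0 : ZMod n) ≠ 1 := by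
    exact_mod_cast hcast 0 1 (by omega) (by omega) (by omega)
  have z12 : (1 : ZMod n) ≠ 2 := by
    exact_mod_cast hcast 1 2 (by omega) (by omega) (by omega)
  have z02 : (0 : ZMod n) ≠ 2 := by
    exact_mod_cast hcast 0 2 (by omega) (by omega) (by omega)
  have z0m : (0 : ZMod n) ≠ m := by
    rw [hmk]; exact_mod_cast hcast 0 k (by omega) (by omega) (by omega)
  have z0n1 : (0 : ZMod n) ≠ -1 := by
    rw [← e_neg1]; exact_mod_cast hcast 0 (n - 1) (by omega) (by omega) (by omega)
  have z0n2 : (0 : ZMod n) ≠ -2 := by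
    rw [← e_neg2]; exact_mod_cast hcast 0 (n - 2) (by omega) (by omega) (by omega)
  have z0m1 : (0 : ZMod n) ≠ m - 1 := by
    rw [← e_m1]; exact_mod_cast hcast 0 (k - 1) (by omega) (by omega) (by omega)
  have z0m2 : (0 : ZMod n) ≠ m - 2 := by
    rw [← e_m2]; exact_mod_cast hcast 0 (k - 2) (by omega) (by omega) (by omega)
  have z21 : (2 : ZMod n) ≠ 1 := by
    exact_mod_cast hcast 2 1 (by omega) (by omega) (by omega)
  have z2n1 : (2 : ZMod n) ≠ -1 := by
    rw [← e_neg1]; exact_mod_cast hcast 2 (n - 1) (by omega) (by omega) (by omega)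
  have z2n2 : (2 : ZMod n) ≠ -2 := by
    rw [← e_neg2]; exact_mod_cast hcast 2 (n - 2) (by omega) (by omega) (by omega)
  have z2m : (2 : ZMod n) ≠ m := by
    rw [hmk]; exact_mod_cast hcast 2 k (by omega) (by omega) (by omega)
  have zm1 : m ≠ 1 := by
    rw [hmk]; exact_mod_cast hcast k 1 (by omega) (by omega) (by omega)
  have zmn1 : m ≠ -1 := by
    rw [hmk, ← e_neg1]; exact_mod_cast hcast k (n - 1) (by omega) (by omega) (by omega)
  have zmn2 : m ≠ -2 := by
    rw [hmk, ← e_neg2]; exact_mod_cast hcast k (n - 2) (by omega) (by omega) (by omega)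
  have zmm1 : m ≠ m - 1 := by
    rw [hmk] at e_m1 ⊢
    rw [← e_m1]; exact_mod_cast hcast k (k - 1) (by omega) (by omega) (by omega)
  have zmm2 : m ≠ m - 2 := by
    rw [hmk] at e_m2 ⊢
    rw [← e_m2]; exact_mod_cast hcast k (k - 2) (by omega) (by omega) (by omega)
  have zn21 : (-2 : ZMod n) ≠ 1 := by
    rw [← e_neg2]; exact_mod_cast hcast (n - 2) 1 (by omega) (by omega) (by omega)
  have zn2n1 : (-2 : ZMod n) ≠ -1 := by
    rw [← e_neg2, ← e_neg1]
    exact_mod_cast hcast (n - 2) (n - 1) (by omega) (by omega) (by omega)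
  have zn1n2 : (-1 : ZMod n) ≠ -2 := fun h => zn2n1 h.symm
  have zn2m1 : (-2 : ZMod n) ≠ m - 1 := by
    rw [← e_neg2, ← e_m1]
    exact_mod_cast hcast (n - 2) (k - 1) (by omega) (by omega) (by omega)
  have zn2m2 : (-2 : ZMod n) ≠ m - 2 := by
    rw [← e_neg2, ← e_m2]
    exact_mod_cast hcast (n - 2) (k - 2) (by omega) (by omega) (by omega)
  have zm2n1 : m - 2 ≠ -1 := by
    rw [← e_neg1, ← e_m2]
    exact_mod_cast hcast (k - 2) (n - 1) (by omega) (by omega) (by omega)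
  have zm2m1 : m - 2 ≠ m - 1 := by
    rw [← e_m1, ← e_m2]
    exact_mod_cast hcast (k - 2) (k - 1) (by omega) (by omega) (by omega)
  have zm1m2 : m - 1 ≠ m - 2 := fun h => zm2m1 h.symm
  -- inverse computations
  have rinv : ∀ i : ZMod n, (r i : DihedralGroup n)⁻¹ = r (-i) := fun _ => rfl
  have srinv : ∀ i : ZMod n, (sr i : DihedralGroup n)⁻¹ = sr i := fun _ => rfl
  -- membership in S
  have memS : ∀ v : DihedralGroup n,
      v ∈ evenS n ↔ v = r 1 ∨ v = r (-1) ∨ v = sr (-1) ∨ v = sr (m - 1) := by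
    intro v
    have h1 : (r 1 : DihedralGroup n)⁻¹ = r (-1) := rfl
    have h2 : (r 1 : DihedralGroup n) * sr 0 = sr (-1) := by
      rw [r_mul_sr]; congr 1; ring
    have h3 : (r (m + 1) : DihedralGroup n) * sr 0 = sr (m - 1) := by
      rw [r_mul_sr]; congr 1; linear_combination -hmm
    rw [evenS]
    rw [← hmdef, h1, h2, h3]
    simp [Set.mem_insert_iff]
  have adj_iff : ∀ x y : DihedralGroup n,
      (cayleyGraph n (evenS n)).Adj x y ↔ x ≠ y ∧ y * x⁻¹ ∈ evenS n := by
    intro x y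
    have hSinv : ∀ z : DihedralGroup n, z ∈ evenS n → z⁻¹ ∈ evenS n := by
      intro z hz
      rw [memS] at hz ⊢
      rcases hz with rfl | rfl | rfl | rfl
      · right; left; exact rinv 1
      · left; rw [rinv]; congr 1; ring
      · right; right; left; exact srinv _
      · right; right; right; exact srinv _
    constructor
    · rintro ⟨hne, h | h⟩
      · exact ⟨hne, h⟩
      · refine ⟨hne, ?_⟩
        have := hSinv _ h
        rwa [mul_inv_rev, inv_inv] at this
    · rintro ⟨hne, h⟩
      exact ⟨hne, Or.inl h⟩
  have memS1 : ∀ i : ZMod n, i = 1 → (r i : DihedralGroup n) ∈ evenS n :=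
    fun i h => (memS _).2 (Or.inl (by rw [h]))
  have memS2 : ∀ i : ZMod n, i = -1 → (r i : DihedralGroup n) ∈ evenS n :=
    fun i h => (memS _).2 (Or.inr (Or.inl (by rw [h])))
  have memS3 : ∀ i : ZMod n, i = -1 → (sr i : DihedralGroup n) ∈ evenS n :=
    fun i h => (memS _).2 (Or.inr (Or.inr (Or.inl (by rw [h]))))
  have memS4 : ∀ i : ZMod n, i = m - 1 → (sr i : DihedralGroup n) ∈ evenS n :=
    fun i h => (memS _).2 (Or.inr (Or.inr (Or.inr (by rw [h]))))
  have E1 : (r m : DihedralGroup n) * sr 0 = sr m := by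
    rw [r_mul_sr]; congr 1; linear_combination -hmm
  have E2 : (r 2 : DihedralGroup n) * sr 0 = sr (-2) := by
    rw [r_mul_sr]; congr 1; ring
  have E3 : (r (m + 2) : DihedralGroup n) * sr 0 = sr (m - 2) := by
    rw [r_mul_sr]; congr 1; linear_combination -hmm
  rw [E1, E2, E3]
  have hset : {v : DihedralGroup n | (cayleyGraph n (evenS n)).dist 1 v = 2} =
      ({r 2, sr 0, sr m, r m, sr (-2), sr (m - 2), r (-2)} : Set (DihedralGroup n)) := by
    ext v
    rw [Set.mem_setOf_eq, dist_eq_two_iff']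
    constructor
    · rintro ⟨hne, hnadj, w, hw1, hw2⟩
      rw [adj_iff] at hw1 hw2
      obtain ⟨-, hw⟩ := hw1
      rw [inv_one, mul_one, memS] at hw
      obtain ⟨-, hv⟩ := hw2
      rw [memS] at hv
      have hveq : ∀ s : DihedralGroup n, v * w⁻¹ = s → v = s * w := by
        intro s h; rw [← h, inv_mul_cancel_right]
      simp only [Set.mem_insert_iff, Set.mem_singleton_iff]
      rcases hw with rfl | rfl | rfl | rfl <;> rcases hv with h | h | h | h <;>
        (replace h := hveq _ h; subst h) <;>
        simp only [rinv, srinv, r_mul_r, r_mul_sr, sr_mul_r, sr_mul_sr] at hne ⊢ <;>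
        first
          | (exfalso; apply hne; rw [one_def]; congr 1; ring1)
          | (refine Or.inl ?_; congr 1; first | ring1 | linear_combination hmm | linear_combination -hmm)
          | (refine Or.inr (Or.inl ?_); congr 1; first | ring1 | linear_combination hmm | linear_combination -hmm)
          | (refine Or.inr (Or.inr (Or.inl ?_)); congr 1; first | ring1 | linear_combination hmm | linear_combination -hmm)
          | (refine Or.inr (Or.inr (Or.inr (Or.inl ?_))); congr 1; first | ring1 | linear_combination hmm | linear_combination -hmm)
          | (refine Or.inr (Or.inr (Or.inr (Or.inr (Or.inl ?_)))); congr 1; first | ring1 | linear_combination hmm | linear_combination -hmm)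
          | (refine Or.inr (Or.inr (Or.inr (Or.inr (Or.inr (Or.inl ?_))))); congr 1; first | ring1 | linear_combination hmm | linear_combination -hmm)
          | (refine Or.inr (Or.inr (Or.inr (Or.inr (Or.inr (Or.inr ?_))))); congr 1; first | ring1 | linear_combination hmm | linear_combination -hmm)
    · intro hv
      simp only [Set.mem_insert_iff, Set.mem_singleton_iff] at hv
      have hnadj : ∀ u : DihedralGroup n,
          (u = r 1 ∨ u = r (-1) ∨ u = sr (-1) ∨ u = sr (m - 1)) → False → True := fun _ _ _ => trivial
      rcases hv with rfl | rfl | rfl | rfl | rfl | rfl | rfl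
      · refine ⟨by simp [-r_zero, one_def, z02], ?_, r 1,
          (adj_iff _ _).2 ⟨by simp [-r_zero, one_def, z01], by rw [inv_one, mul_one]; exact memS1 _ rfl⟩,
          (adj_iff _ _).2 ⟨by simp [z12], ?_⟩⟩
        · intro hA
          obtain ⟨-, hA⟩ := (adj_iff _ _).1 hA
          rw [inv_one, mul_one, memS] at hA
          rcases hA with h | h | h | h <;> simp [z21, z2n1] at h
        · simp only [rinv, r_mul_r]
          exact memS1 _ (by ring)
      · refine ⟨by simp [-r_zero, one_def], ?_, r 1,
          (adj_iff _ _).2 ⟨by simp [-r_zero, one_def, z01], by rw [inv_one, mul_one]; exact memS1 _ rfl⟩,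
          (adj_iff _ _).2 ⟨by simp, ?_⟩⟩
        · intro hA
          obtain ⟨-, hA⟩ := (adj_iff _ _).1 hA
          rw [inv_one, mul_one, memS] at hA
          rcases hA with h | h | h | h <;> simp [z0n1, z0m1] at h
        · simp only [rinv, sr_mul_r]
          exact memS3 _ (by ring)
      · refine ⟨by simp [-r_zero, one_def], ?_, r 1,
          (adj_iff _ _).2 ⟨by simp [-r_zero, one_def, z01], by rw [inv_one, mul_one]; exact memS1 _ rfl⟩,
          (adj_iff _ _).2 ⟨by simp, ?_⟩⟩
        · intro hA
          obtain ⟨-, hA⟩ := (adj_iff _ _).1 hA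
          rw [inv_one, mul_one, memS] at hA
          rcases hA with h | h | h | h <;> simp [zmn1, zmm1] at h
        · simp only [rinv, sr_mul_r]
          exact memS4 _ (by ring)
      · refine ⟨by simp [-r_zero, one_def, z0m], ?_, sr (m - 1),
          (adj_iff _ _).2 ⟨by simp [-r_zero, one_def], by rw [inv_one, mul_one]; exact memS4 _ rfl⟩,
          (adj_iff _ _).2 ⟨by simp, ?_⟩⟩
        · intro hA
          obtain ⟨-, hA⟩ := (adj_iff _ _).1 hA
          rw [inv_one, mul_one, memS] at hA
          rcases hA with h | h | h | h <;> simp [zm1, zmn1] at h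
        · simp only [srinv, r_mul_sr]
          exact memS3 _ (by ring)
      · refine ⟨by simp [-r_zero, one_def], ?_, sr (-1),
          (adj_iff _ _).2 ⟨by simp [-r_zero, one_def], by rw [inv_one, mul_one]; exact memS3 _ rfl⟩,
          (adj_iff _ _).2 ⟨by simp [zn1n2], ?_⟩⟩
        · intro hA
          obtain ⟨-, hA⟩ := (adj_iff _ _).1 hA
          rw [inv_one, mul_one, memS] at hA
          rcases hA with h | h | h | h <;> simp [zn2n1, zn2m1] at h
        · simp only [srinv, sr_mul_sr]
          exact memS1 _ (by ring)
      · refine ⟨by simp [-r_zero, one_def], ?_, sr (m - 1),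
          (adj_iff _ _).2 ⟨by simp [-r_zero, one_def], by rw [inv_one, mul_one]; exact memS4 _ rfl⟩,
          (adj_iff _ _).2 ⟨by simp [zm1m2], ?_⟩⟩
        · intro hA
          obtain ⟨-, hA⟩ := (adj_iff _ _).1 hA
          rw [inv_one, mul_one, memS] at hA
          rcases hA with h | h | h | h <;> simp [zm2n1, zm2m1] at h
        · simp only [srinv, sr_mul_sr]
          exact memS1 _ (by ring)
      · refine ⟨by simp [-r_zero, one_def, z0n2], ?_, r (-1),
          (adj_iff _ _).2 ⟨by simp [-r_zero, one_def, z0n1], by rw [inv_one, mul_one]; exact memS2 _ rfl⟩,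
          (adj_iff _ _).2 ⟨by simp [zn1n2], ?_⟩⟩
        · intro hA
          obtain ⟨-, hA⟩ := (adj_iff _ _).1 hA
          rw [inv_one, mul_one, memS] at hA
          rcases hA with h | h | h | h <;> simp [zn21, zn2n1] at h
        · simp only [rinv, r_mul_r]
          exact memS2 _ (by ring)
  refine ⟨hset, ?_⟩
  rw [hset]
  rw [Set.ncard_insert_of_notMem (by simp [z2m, z2n2]),
      Set.ncard_insert_of_notMem (by simp [z0m, z0n2, z0m2]),
      Set.ncard_insert_of_notMem (by simp [zmn2, zmm2]),
      Set.ncard_insert_of_notMem (by simp [zmn2]),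
      Set.ncard_insert_of_notMem (by simp [zn2m2]),
      Set.ncard_insert_of_notMem (by simp),
      Set.ncard_singleton]
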